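/- If two planar vector fields X = (x H(x,y), y H(x,y)) and Z = (R(x,y), S(x,y)) commute ([X,Z] = 0), where H is homogeneous of degree d and R, S are homogeneous of degree n, then (x Hₓ + (1−n) H) R + x Hᵧ S = 0 and y Hₓ R + (y Hᵧ + (1−n) H) S = 0 identically. -/

import Mathlib

open Real MvPolynomial

private lemma X_mul_pderiv_monomial (i : Fin 2) (s : Fin 2 →₀ ℕ) (a : ℝ) :
    X i * pderiv i (monomial s a) = (s i : MvPolynomial (Fin 2) ℝ) * monomial s a := by
  rw [pderiv_monomial]
  rcases Nat.eq_zero_or_pos (s i) with h | h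
  · simp [h]
  · have hle : Finsupp.single i 1 ≤ s := by
      rw [Finsupp.single_le_iff]; exact h
    rw [X, monomial_mul, one_mul, add_tsub_cancel_of_le hle]
    rw [← C_eq_coe_nat, C_mul_monomial, mul_comm]

private lemma euler2 {d : ℕ} {P : MvPolynomial (Fin 2) ℝ} (h : P.IsHomogeneous d) :
    X 0 * pderiv 0 P + X 1 * pderiv 1 P = (d : MvPolynomial (Fin 2) ℝ) * P := by
  conv_lhs => rw [← P.support_sum_monomial_coeff]
  rw [map_sum, map_sum, Finset.mul_sum, Finset.mul_sum, ← Finset.sum_add_distrib]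
  conv_rhs => rw [← P.support_sum_monomial_coeff, Finset.mul_sum]
  refine Finset.sum_congr rfl fun s hs => ?_
  rw [X_mul_pderiv_monomial, X_mul_pderiv_monomial, ← add_mul, ← Nat.cast_add]
  congr 1
  have hd : s.degree = d := by
    have := h (mem_support_iff.mp hs)
    rw [Finsupp.degree_eq_weight_one]; exact this
  rw [← hd]
  congr 1
  rw [Finsupp.degree_eq_sum]
  exact (Fin.sum_univ_two s).symm

private lemma hasFDerivAt_eval (P : MvPolynomial (Fin 2) ℝ) (p : ℝ × ℝ) :
    HasFDerivAt (fun q : ℝ × ℝ => eval ![q.1, q.2] P)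
      (eval ![p.1, p.2] (pderiv 0 P) • (ContinuousLinearMap.fst ℝ ℝ ℝ)
        + eval ![p.1, p.2] (pderiv 1 P) • (ContinuousLinearMap.snd ℝ ℝ ℝ)) p := by
  induction P using MvPolynomial.induction_on with
  | C a =>
    simpa using hasFDerivAt_const (eval ![p.1, p.2] (C a)) p
  | add f g hf hg =>
    have := hf.add hg
    refine HasFDerivAt.congr_of_eventuallyEq (this.congr_fderiv ?_) (Filter.Eventually.of_forall ?_)
    swap
    · intro q; simp
    · simp only [map_add, eval_add]
      module
  | mul_X f i hf =>
    have hXi : HasFDerivAt (fun q : ℝ × ℝ => ![q.1, q.2] i)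
        (if i = 0 then ContinuousLinearMap.fst ℝ ℝ ℝ else ContinuousLinearMap.snd ℝ ℝ ℝ) p := by
      fin_cases i
      · simpa using hasFDerivAt_fst (p := p)
      · simpa using hasFDerivAt_snd (p := p)
    have := hf.mul hXi
    refine HasFDerivAt.congr_of_eventuallyEq (this.congr_fderiv ?_) (Filter.Eventually.of_forall ?_)
    swap
    · intro q; simp
    · fin_cases i <;>
      · simp only [pderiv_mul, map_add, eval_add, eval_mul, pderiv_X_self, pderiv_X_of_ne,
          eval_X]
        ext <;> · simp; try ring

private lemma deriv_eval_fst (P : MvPolynomial (Fin 2) ℝ) (x y : ℝ) :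
    deriv (fun x' => eval ![x', y] P) x = eval ![x, y] (pderiv 0 P) := by
  have h1 : HasDerivAt (fun x' : ℝ => (x', y)) ((1 : ℝ), (0 : ℝ)) x :=
    (hasDerivAt_id x).prodMk (hasDerivAt_const x y)
  have h2 := (hasFDerivAt_eval P (x, y)).comp_hasDerivAt x h1
  simpa [Function.comp_def] using h2.deriv

private lemma deriv_eval_snd (P : MvPolynomial (Fin 2) ℝ) (x y : ℝ) :
    deriv (fun y' => eval ![x, y'] P) y = eval ![x, y] (pderiv 1 P) := by
  have h1 : HasDerivAt (fun y' : ℝ => (x, y')) ((0 : ℝ), (1 : ℝ)) y :=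
    (hasDerivAt_const y x).prodMk (hasDerivAt_id y)
  have h2 := (hasFDerivAt_eval P (x, y)).comp_hasDerivAt y h1
  simpa [Function.comp_def] using h2.deriv

/-- If the fields `X = (xH, yH)` and `Z = (R, S)` commute, with `H` homogeneous
of degree `d` and `R, S` homogeneous of degree `n`, then the two linear
identities in the statement hold. -/
theorem stmt9 (d n : ℕ) (H R S : MvPolynomial (Fin 2) ℝ)
    (hH : H.IsHomogeneous d) (hR : R.IsHomogeneous n) (hS : S.IsHomogeneous n)
    (X Z : ℝ × ℝ → ℝ × ℝ)
    (hX : ∀ p : ℝ × ℝ, X p =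
      (p.1 * eval ![p.1, p.2] H, p.2 * eval ![p.1, p.2] H))
    (hZ : ∀ p : ℝ × ℝ, Z p = (eval ![p.1, p.2] R, eval ![p.1, p.2] S))
    (hcomm : ∀ p : ℝ × ℝ, fderiv ℝ Z p (X p) = fderiv ℝ X p (Z p)) :
    ∀ x y : ℝ,
      ((x * deriv (fun x' => eval ![x', y] H) x + (1 - (n : ℝ)) * eval ![x, y] H)
            * eval ![x, y] R
          + x * deriv (fun y' => eval ![x, y'] H) y * eval ![x, y] S = 0) ∧
      (y * deriv (fun x' => eval ![x', y] H) x * eval ![x, y] R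
          + (y * deriv (fun y' => eval ![x, y'] H) y + (1 - (n : ℝ)) * eval ![x, y] H)
            * eval ![x, y] S = 0) := by
  intro x y
  have hZfun : Z = fun q : ℝ × ℝ => (eval ![q.1, q.2] R, eval ![q.1, q.2] S) := funext hZ
  have hXfun : X = fun q : ℝ × ℝ =>
      (q.1 * eval ![q.1, q.2] H, q.2 * eval ![q.1, q.2] H) := funext hX
  set p : ℝ × ℝ := (x, y) with hp
  have hZd := (hasFDerivAt_eval R p).prodMk (hasFDerivAt_eval S p)
  have hXd : HasFDerivAt
      (fun q : ℝ × ℝ => (q.1 * eval ![q.1, q.2] H, q.2 * eval ![q.1, q.2] H)) _ p :=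
    ((hasFDerivAt_fst (p := p)).mul (hasFDerivAt_eval H p)).prodMk
    ((hasFDerivAt_snd (p := p)).mul (hasFDerivAt_eval H p))
  have key := hcomm p
  rw [hZfun, hXfun, hZd.fderiv, hXd.fderiv] at key
  simp only [ContinuousLinearMap.prod_apply, ContinuousLinearMap.add_apply,
    ContinuousLinearMap.coe_smul', Pi.smul_apply, ContinuousLinearMap.coe_fst',
    ContinuousLinearMap.coe_snd', smul_eq_mul, Prod.mk.injEq] at key
  obtain ⟨k1, k2⟩ := key
  have eR := congrArg (eval ![x, y]) (euler2 hR)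
  have eS := congrArg (eval ![x, y]) (euler2 hS)
  simp only [eval_add, eval_mul, eval_X, Matrix.cons_val_zero, Matrix.cons_val_one,
    Matrix.head_cons, map_natCast] at eR eS
  rw [deriv_eval_fst, deriv_eval_snd]
  constructor
  · linear_combination eval ![x, y] H * eR - k1
  · linear_combination eval ![x, y] H * eS - k2
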